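/- Under Assumptions 1 and 2 with μ > 0, if Local SGD is run with stepsize η = 1/L, then for every T = RK the averaged iterate satisfies E‖x̄^{(T)} − x*‖² ≤ (1 − μ/L)^T · ‖x^{(0)} − x*‖², where x* is the minimizer of f. -/

import Mathlib

open MeasureTheory ProbabilityTheory
open scoped RealInnerProductSpace

section Aux

variable {E : Type*} [NormedAddCommGroup E] [InnerProductSpace ℝ E] [CompleteSpace E]

/-- Descent lemma: a function with `L`-Lipschitz gradient satisfies the quadratic upper bound. -/
lemma my_descent (f : E → ℝ) (g : E → E) (L : ℝ) (hL : 0 < L)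
    (hgrad : ∀ x, HasGradientAt f (g x) x)
    (hlip : ∀ x y, ‖g x - g y‖ ≤ L * ‖x - y‖) (a b : E) :
    f b ≤ f a + ⟪g a, b - a⟫ + L / 2 * ‖b - a‖ ^ 2 := by
  set c : ℝ → E := fun t => a + t • (b - a) with hc
  have hcd : ∀ t : ℝ, HasDerivAt c (b - a) t := fun t => by
    simpa [hc] using ((hasDerivAt_id t).smul_const (b - a)).const_add a
  have hφ : ∀ t : ℝ, HasDerivAt (fun t => f (c t)) ⟪g (c t), b - a⟫ t := fun t => by
    have h1 := (hgrad (c t)).hasFDerivAt.comp_hasDerivAt t (hcd t)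
    simp only [InnerProductSpace.toDual_apply_apply] at h1
    exact h1
  set ψ : ℝ → ℝ := fun t => f (c t) - t * ⟪g a, b - a⟫ - t ^ 2 * (L / 2 * ‖b - a‖ ^ 2) with hψ
  have hψd : ∀ t : ℝ, HasDerivAt ψ
      (⟪g (c t), b - a⟫ - ⟪g a, b - a⟫ - 2 * t * (L / 2 * ‖b - a‖ ^ 2)) t := by
    intro t
    have h2 : HasDerivAt (fun t : ℝ => t * ⟪g a, b - a⟫) ⟪g a, b - a⟫ t := by
      simpa using (hasDerivAt_id t).mul_const ⟪g a, b - a⟫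
    have h3 : HasDerivAt (fun t : ℝ => t ^ 2 * (L / 2 * ‖b - a‖ ^ 2))
        (2 * t * (L / 2 * ‖b - a‖ ^ 2)) t := by
      simpa using (hasDerivAt_pow 2 t).mul_const (L / 2 * ‖b - a‖ ^ 2)
    exact ((hφ t).sub h2).sub h3
  have hcont : ContinuousOn ψ (Set.Icc 0 1) :=
    (continuous_iff_continuousAt.2 fun t => (hψd t).continuousAt).continuousOn
  have hdiff : DifferentiableOn ℝ ψ (interior (Set.Icc (0:ℝ) 1)) :=
    fun t _ => ((hψd t).differentiableAt).differentiableWithinAt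
  have hnonpos : ∀ t ∈ interior (Set.Icc (0:ℝ) 1), deriv ψ t ≤ 0 := by
    intro t ht
    rw [interior_Icc] at ht
    rw [(hψd t).deriv]
    have h1 : ⟪g (c t), b - a⟫ - ⟪g a, b - a⟫ = ⟪g (c t) - g a, b - a⟫ := by
      rw [inner_sub_left]
    have h2 : ⟪g (c t) - g a, b - a⟫ ≤ ‖g (c t) - g a‖ * ‖b - a‖ := real_inner_le_norm _ _
    have h3 : ‖g (c t) - g a‖ ≤ L * (t * ‖b - a‖) := by
      have := hlip (c t) a
      have hca : c t - a = t • (b - a) := by simp [hc]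
      rw [hca, norm_smul, Real.norm_eq_abs, abs_of_pos ht.1] at this
      exact this
    have hb : (0:ℝ) ≤ ‖b - a‖ := norm_nonneg _
    nlinarith [ht.1.le, mul_le_mul_of_nonneg_right h3 hb]
  have hmono := antitoneOn_of_deriv_nonpos (convex_Icc (0:ℝ) 1) hcont hdiff hnonpos
  have h01 := hmono (Set.left_mem_Icc.2 zero_le_one) (Set.right_mem_Icc.2 zero_le_one) zero_le_one
  have hc0 : c 0 = a := by simp [hc]
  have hc1 : c 1 = b := by simp [hc]
  simp only [hψ, hc0, hc1] at h01
  nlinarith [h01]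

/-- Half of co-coercivity: the interpolation inequality. -/
lemma my_interp (f : E → ℝ) (g : E → E) (L : ℝ) (hL : 0 < L)
    (hgrad : ∀ x, HasGradientAt f (g x) x)
    (hlip : ∀ x y, ‖g x - g y‖ ≤ L * ‖x - y‖)
    (hconv : ∀ x y, f y + ⟪g y, x - y⟫ ≤ f x) (x y : E) :
    f x + ⟪g x, y - x⟫ + 1 / (2 * L) * ‖g y - g x‖ ^ 2 ≤ f y := by
  set w := g y - g x with hw
  set z := y - (1 / L) • w with hz
  have hd := my_descent f g L hL hgrad hlip y z
  have hcx := hconv z x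
  have hzy : z - y = -((1 / L) • w) := by simp [hz]
  have e1 : ⟪g y, z - y⟫ = -(1 / L * ⟪g y, w⟫) := by
    rw [hzy, inner_neg_right, real_inner_smul_right]
  have e2 : ‖z - y‖ ^ 2 = (1 / L) ^ 2 * ‖w‖ ^ 2 := by
    rw [hzy, norm_neg, norm_smul, mul_pow, Real.norm_eq_abs, sq_abs]
  have e3 : ⟪g x, z - x⟫ = ⟪g x, y - x⟫ - 1 / L * ⟪g x, w⟫ := by
    have : z - x = (y - x) - (1 / L) • w := by rw [hz]; abel
    rw [this, inner_sub_right, real_inner_smul_right]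
  have e4 : ⟪g y, w⟫ - ⟪g x, w⟫ = ‖w‖ ^ 2 := by
    rw [← inner_sub_left, ← hw, real_inner_self_eq_norm_sq]
  rw [e1, e2] at hd
  rw [e3] at hcx
  have hL' : L ≠ 0 := ne_of_gt hL
  have goal : 1 / (2 * L) * ‖w‖ ^ 2 = 1 / L * ‖w‖ ^ 2 - L / 2 * ((1 / L) ^ 2 * ‖w‖ ^ 2) := by
    field_simp; ring
  have e5 : 1 / L * ⟪g y, w⟫ - 1 / L * ⟪g x, w⟫ = 1 / L * ‖w‖ ^ 2 := by
    rw [← mul_sub, e4]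
  linarith [hd, hcx, e5, goal]

/-- Co-coercivity. -/
lemma my_coco (f : E → ℝ) (g : E → E) (L : ℝ) (hL : 0 < L)
    (hgrad : ∀ x, HasGradientAt f (g x) x)
    (hlip : ∀ x y, ‖g x - g y‖ ≤ L * ‖x - y‖)
    (hconv : ∀ x y, f y + ⟪g y, x - y⟫ ≤ f x) (x y : E) :
    1 / L * ‖g x - g y‖ ^ 2 ≤ ⟪g x - g y, x - y⟫ := by
  have h1 := my_interp f g L hL hgrad hlip hconv x y
  have h2 := my_interp f g L hL hgrad hlip hconv y x
  have e1 : ‖g y - g x‖ = ‖g x - g y‖ := norm_sub_rev _ _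
  have e2 : ⟪g x, y - x⟫ = -⟪g x, x - y⟫ := by
    have : y - x = -(x - y) := by abel
    rw [this, inner_neg_right]
  have e3 : ⟪g x - g y, x - y⟫ = ⟪g x, x - y⟫ - ⟪g y, x - y⟫ := inner_sub_left _ _ _
  rw [e1] at h1
  rw [e2] at h1
  have hL' : (0:ℝ) < 2 * L := by linarith
  have e4 : 1 / L * ‖g x - g y‖ ^ 2
      = 1 / (2 * L) * ‖g x - g y‖ ^ 2 + 1 / (2 * L) * ‖g x - g y‖ ^ 2 := by
    field_simp; ring
  linarith [h1, h2, e3, e4]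

/-- Per-step contraction of a gradient step with stepsize 1/L at an interpolation point. -/
lemma my_contract (f : E → ℝ) (g : E → E) (L μ : ℝ) (hL : 0 < L) (hμ : 0 < μ)
    (hgrad : ∀ x, HasGradientAt f (g x) x)
    (hlip : ∀ x y, ‖g x - g y‖ ≤ L * ‖x - y‖)
    (hsc : ∀ x y, f y + ⟪g y, x - y⟫ + μ / 2 * ‖x - y‖ ^ 2 ≤ f x)
    (xs : E) (hxs : g xs = 0) (x : E) :
    ‖x - (1 / L) • g x - xs‖ ^ 2 ≤ (1 - μ / L) * ‖x - xs‖ ^ 2 := by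
  have hconv : ∀ x y, f y + ⟪g y, x - y⟫ ≤ f x := by
    intro a b
    have := hsc a b
    nlinarith [sq_nonneg ‖a - b‖, this]
  -- strong monotonicity: ⟪g x, x - xs⟫ ≥ μ ‖x - xs‖²
  have hmono : μ * ‖x - xs‖ ^ 2 ≤ ⟪g x, x - xs⟫ := by
    have h1 := hsc x xs
    have h2 := hsc xs x
    rw [hxs] at h1
    simp only [inner_zero_left] at h1
    have e1 : ‖xs - x‖ = ‖x - xs‖ := norm_sub_rev _ _
    have e2 : ⟪g x, xs - x⟫ = -⟪g x, x - xs⟫ := by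
      have : xs - x = -(x - xs) := by abel
      rw [this, inner_neg_right]
    rw [e1, e2] at h2
    nlinarith [h1, h2]
  -- co-coercivity at xs
  have hcc : 1 / L * ‖g x‖ ^ 2 ≤ ⟪g x, x - xs⟫ := by
    have := my_coco f g L hL hgrad hlip hconv x xs
    rw [hxs] at this
    simpa using this
  have expand : ‖x - (1 / L) • g x - xs‖ ^ 2
      = ‖x - xs‖ ^ 2 - 2 * (1 / L) * ⟪g x, x - xs⟫ + (1 / L) ^ 2 * ‖g x‖ ^ 2 := by
    have : x - (1 / L) • g x - xs = (x - xs) - (1 / L) • g x := by abel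
    rw [this, norm_sub_sq_real, real_inner_smul_right, norm_smul, mul_pow,
      Real.norm_eq_abs, sq_abs, real_inner_comm]
    ring
  rw [expand]
  have hL' : (0:ℝ) < 1 / L := by positivity
  have h1 := mul_le_mul_of_nonneg_left hmono hL'.le
  have h2 := mul_le_mul_of_nonneg_left hcc hL'.le
  ring_nf at h1 h2 ⊢
  linarith

/-- Jensen-type inequality for the squared distance of an average. -/
lemma my_avg_sq {n : ℕ} (hn : 0 < n) (z : Fin n → E) :
    ‖(n : ℝ)⁻¹ • ∑ j, z j‖ ^ 2 ≤ (n : ℝ)⁻¹ * ∑ j, ‖z j‖ ^ 2 := by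
  have hnR : (0 : ℝ) < n := Nat.cast_pos.2 hn
  have h1 : ‖∑ j, z j‖ ≤ ∑ j, ‖z j‖ := norm_sum_le _ _
  have h2 : (∑ j, ‖z j‖) ^ 2 ≤ (n : ℝ) * ∑ j, ‖z j‖ ^ 2 := by
    simpa using sq_sum_le_card_mul_sum_sq (s := (Finset.univ : Finset (Fin n)))
      (f := fun j => ‖z j‖)
  have h3 : ‖∑ j, z j‖ ^ 2 ≤ (n : ℝ) * ∑ j, ‖z j‖ ^ 2 :=
    le_trans (pow_le_pow_left₀ (norm_nonneg _) h1 2) h2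
  rw [norm_smul, Real.norm_eq_abs, abs_inv, Nat.abs_cast, mul_pow]
  have e : ((n : ℝ)⁻¹) ^ 2 * ((n : ℝ) * ∑ j, ‖z j‖ ^ 2) = (n : ℝ)⁻¹ * ∑ j, ‖z j‖ ^ 2 := by
    field_simp
  nlinarith [h3, sq_nonneg ((n : ℝ)⁻¹)]

lemma my_avg_dist_sq {n : ℕ} (hn : 0 < n) (z : Fin n → E) (p : E) :
    ‖(n : ℝ)⁻¹ • ∑ j, z j - p‖ ^ 2 ≤ (n : ℝ)⁻¹ * ∑ j, ‖z j - p‖ ^ 2 := by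
  have hnR : (n : ℝ) ≠ 0 := Nat.cast_ne_zero.2 hn.ne'
  have hsum : ∑ j : Fin n, (z j - p) = (∑ j, z j) - n • p := by
    rw [Finset.sum_sub_distrib, Finset.sum_const, Finset.card_univ, Fintype.card_fin]
  have h0 : (n : ℝ)⁻¹ • ∑ j, z j - p = (n : ℝ)⁻¹ • ∑ j : Fin n, (z j - p) := by
    rw [hsum, smul_sub]
    congr 1
    rw [← Nat.cast_smul_eq_nsmul ℝ, smul_smul, inv_mul_cancel₀ hnR, one_smul]
  rw [h0]
  exact my_avg_sq hn fun j => z j - p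

end Aux

/-- Theorem 1: under μ-strong convexity (Assumption 1) and interpolation (Assumption 2)
with μ > 0, Local SGD with stepsize η = 1/L satisfies, for T = RK total iterations,
`E ‖x̄⁽ᵀ⁾ - x*‖² ≤ (1 - μ/L)^T ‖x⁽⁰⁾ - x*‖²`. -/
theorem local_sgd_strongly_convex
    {d n : ℕ} (hn : 0 < n)
    {Ω S : Type*} [MeasurableSpace Ω] [MeasurableSpace S]
    -- underlying probability space
    (P : Measure Ω) [IsProbabilityMeasure P]
    -- local sample distributions
    (D : Fin n → Measure S) (hD : ∀ i, IsProbabilityMeasure (D i))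
    -- sample loss functions and their (stochastic) gradients
    (F : Fin n → EuclideanSpace ℝ (Fin d) → S → ℝ)
    (g : Fin n → EuclideanSpace ℝ (Fin d) → S → EuclideanSpace ℝ (Fin d))
    (L μ : ℝ) (hL : 0 < L) (hμ : 0 < μ)
    -- g i x s is the gradient of the sample loss F i · s at x
    (hgrad : ∀ i s x, HasGradientAt (fun y => F i y s) (g i x s) x)
    (hgmeas : ∀ i, Measurable (fun p : EuclideanSpace ℝ (Fin d) × S => g i p.1 p.2))
    -- each sample loss is L-smooth
    (hsmooth : ∀ i s x y, ‖g i x s - g i y s‖ ≤ L * ‖x - y‖)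
    -- Assumption 1: μ-strong convexity of each sample loss
    (hsc : ∀ i s x y,
      F i x s ≥ F i y s + ⟪g i y s, x - y⟫ + μ / 2 * ‖x - y‖ ^ 2)
    -- integrability of the sample losses
    (hFint : ∀ i x, Integrable (fun s => F i x s) (D i))
    -- local objectives fᵢ(x) = E_{ξᵢ ∼ Dᵢ}[F i x ξᵢ] and global objective f
    (fi : Fin n → EuclideanSpace ℝ (Fin d) → ℝ)
    (hfi : ∀ i x, fi i x = ∫ s, F i x s ∂(D i))
    (f : EuclideanSpace ℝ (Fin d) → ℝ)
    (hf : ∀ x, f x = (n : ℝ)⁻¹ * ∑ i, fi i x)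
    -- Assumption 2: interpolation at a global minimizer x*
    (xstar : EuclideanSpace ℝ (Fin d)) (hmin : ∀ x, f xstar ≤ f x)
    (hinterp : ∀ i s, g i xstar s = 0)
    -- Local SGD: K local steps per round, R rounds, T = RK total iterations
    (K R T : ℕ) (hK : 0 < K) (hR : 0 < R) (hT : T = R * K)
    -- stepsize η = 1/L
    (η : ℝ) (hη : η = 1 / L)
    -- i.i.d. samples ξᵢ⁽ᵗ⁾ ∼ Dᵢ, independent across nodes and iterations
    (ξ : Fin n → ℕ → Ω → S)
    (hξmeas : ∀ i t, Measurable (ξ i t))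
    (hindep : iIndepFun (fun p : Fin n × ℕ => ξ p.1 p.2) P)
    (hdist : ∀ i t, P.map (ξ i t) = D i)
    -- the Local SGD iterates: common initialization, local steps, averaging at times in I
    (X : ℕ → Fin n → Ω → EuclideanSpace ℝ (Fin d))
    (x0 : EuclideanSpace ℝ (Fin d))
    (hX0 : ∀ i ω, X 0 i ω = x0)
    (hXrec : ∀ t i ω,
      X (t + 1) i ω =
        if (t + 1) % K = 0 then
          (n : ℝ)⁻¹ • ∑ j, (X t j ω - η • g j (X t j ω) (ξ j t ω))
        else X t i ω - η • g i (X t i ω) (ξ i t ω)) :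
    ∫ ω, ‖(n : ℝ)⁻¹ • ∑ i, X T i ω - xstar‖ ^ 2 ∂P
      ≤ (1 - μ / L) ^ T * ‖x0 - xstar‖ ^ 2 := by
  classical
  by_cases hd : d = 0
  · -- trivial case: the space is a point
    subst hd
    have hsub : ∀ v : EuclideanSpace ℝ (Fin 0), v = 0 := fun v => by ext i; exact i.elim0
    have h1 : ∀ ω : Ω, ‖(n : ℝ)⁻¹ • ∑ i, X T i ω - xstar‖ ^ 2 = 0 := fun ω => by
      rw [hsub ((n : ℝ)⁻¹ • ∑ i, X T i ω - xstar)]; simp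
    simp only [h1, integral_zero]
    rw [hsub (x0 - xstar)]
    simp
  · have hd' : 0 < d := Nat.pos_of_ne_zero hd
    have hnR : (n : ℝ) ≠ 0 := Nat.cast_ne_zero.2 hn.ne'
    -- S is nonempty since D i is a probability measure
    have hS : Nonempty S := by
      by_contra h
      have h1 : (D ⟨0, hn⟩) Set.univ = 1 := (hD _).measure_univ
      rw [Set.univ_eq_empty_iff.2 (not_nonempty_iff.1 h), measure_empty] at h1
      exact zero_ne_one h1
    obtain ⟨s0⟩ := hS
    set i0 : Fin n := ⟨0, hn⟩
    -- μ ≤ L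
    have hμL : μ ≤ L := by
      set e : EuclideanSpace ℝ (Fin d) := EuclideanSpace.single ⟨0, hd'⟩ (1 : ℝ) with he'
      have he : ‖e‖ = 1 := by rw [he', EuclideanSpace.norm_single]; simp
      set x : EuclideanSpace ℝ (Fin d) := xstar + e with hx'
      have hxx : x - xstar = e := by rw [hx']; abel
      have h1 := hsc i0 s0 x xstar
      have h2 := hsc i0 s0 xstar x
      rw [hinterp i0 s0] at h1
      simp only [inner_zero_left] at h1
      have e2 : ⟪g i0 x s0, xstar - x⟫ = -⟪g i0 x s0, x - xstar⟫ := by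
        rw [show xstar - x = -(x - xstar) by abel, inner_neg_right]
      have e3 : ‖xstar - x‖ = ‖x - xstar‖ := norm_sub_rev _ _
      rw [e2, e3] at h2
      have hinner : μ * ‖x - xstar‖ ^ 2 ≤ ⟪g i0 x s0, x - xstar⟫ := by nlinarith [h1, h2]
      have hCS : ⟪g i0 x s0, x - xstar⟫ ≤ ‖g i0 x s0‖ * ‖x - xstar‖ := real_inner_le_norm _ _
      have hlipx : ‖g i0 x s0‖ ≤ L * ‖x - xstar‖ := by
        have h3 := hsmooth i0 s0 x xstar
        rwa [hinterp i0 s0, sub_zero] at h3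
      rw [hxx, he] at hinner hCS hlipx
      nlinarith [hinner, hCS, hlipx]
    set q : ℝ := 1 - μ / L with hq
    have hq0 : 0 ≤ q := by
      rw [hq]
      have : μ / L ≤ 1 := (div_le_one hL).2 hμL
      linarith
    -- per-sample, per-step contraction
    have hstep : ∀ i s x, ‖x - η • g i x s - xstar‖ ^ 2 ≤ q * ‖x - xstar‖ ^ 2 := by
      intro i s x
      rw [hη, hq]
      exact my_contract (fun y => F i y s) (fun y => g i y s) L μ hL hμ (hgrad i s)
        (fun a b => hsmooth i s a b) (fun a b => hsc i s a b) xstar (hinterp i s) x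
    -- Lyapunov recursion
    have hV : ∀ t ω, (n : ℝ)⁻¹ * ∑ i, ‖X t i ω - xstar‖ ^ 2 ≤ q ^ t * ‖x0 - xstar‖ ^ 2 := by
      intro t
      induction t with
      | zero =>
        intro ω
        simp only [hX0, pow_zero, one_mul]
        rw [Finset.sum_const, Finset.card_univ, Fintype.card_fin, nsmul_eq_mul, ← mul_assoc,
          inv_mul_cancel₀ hnR, one_mul]
      | succ t ih =>
        intro ω
        have hsum : ∑ j, ‖(X t j ω - η • g j (X t j ω) (ξ j t ω)) - xstar‖ ^ 2
            ≤ q * ∑ j, ‖X t j ω - xstar‖ ^ 2 := by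
          rw [Finset.mul_sum]
          exact Finset.sum_le_sum fun j _ => hstep j (ξ j t ω) (X t j ω)
        have hmain : (n : ℝ)⁻¹ * ∑ i, ‖X (t + 1) i ω - xstar‖ ^ 2
            ≤ q * ((n : ℝ)⁻¹ * ∑ i, ‖X t i ω - xstar‖ ^ 2) := by
          by_cases hav : (t + 1) % K = 0
          · have hXe : ∀ i, X (t + 1) i ω
                = (n : ℝ)⁻¹ • ∑ j, (X t j ω - η • g j (X t j ω) (ξ j t ω)) := fun i => by
              rw [hXrec t i ω, if_pos hav]
            have havg : ‖(n : ℝ)⁻¹ • (∑ j, (X t j ω - η • g j (X t j ω) (ξ j t ω))) - xstar‖ ^ 2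
                ≤ (n : ℝ)⁻¹ * ∑ j, ‖(X t j ω - η • g j (X t j ω) (ξ j t ω)) - xstar‖ ^ 2 :=
              my_avg_dist_sq hn _ xstar
            simp only [hXe]
            rw [Finset.sum_const, Finset.card_univ, Fintype.card_fin, nsmul_eq_mul, ← mul_assoc,
              inv_mul_cancel₀ hnR, one_mul]
            calc ‖(n : ℝ)⁻¹ • (∑ j, (X t j ω - η • g j (X t j ω) (ξ j t ω))) - xstar‖ ^ 2
                ≤ (n : ℝ)⁻¹ * ∑ j, ‖(X t j ω - η • g j (X t j ω) (ξ j t ω)) - xstar‖ ^ 2 := havg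
              _ ≤ (n : ℝ)⁻¹ * (q * ∑ j, ‖X t j ω - xstar‖ ^ 2) :=
                  mul_le_mul_of_nonneg_left hsum (by positivity)
              _ = q * ((n : ℝ)⁻¹ * ∑ i, ‖X t i ω - xstar‖ ^ 2) := by ring
          · have hXe : ∀ i, X (t + 1) i ω
                = X t i ω - η • g i (X t i ω) (ξ i t ω) := fun i => by
              rw [hXrec t i ω, if_neg hav]
            simp only [hXe]
            calc (n : ℝ)⁻¹ * ∑ i, ‖(X t i ω - η • g i (X t i ω) (ξ i t ω)) - xstar‖ ^ 2
                ≤ (n : ℝ)⁻¹ * (q * ∑ j, ‖X t j ω - xstar‖ ^ 2) :=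
                  mul_le_mul_of_nonneg_left hsum (by positivity)
              _ = q * ((n : ℝ)⁻¹ * ∑ i, ‖X t i ω - xstar‖ ^ 2) := by ring
        calc (n : ℝ)⁻¹ * ∑ i, ‖X (t + 1) i ω - xstar‖ ^ 2
            ≤ q * ((n : ℝ)⁻¹ * ∑ i, ‖X t i ω - xstar‖ ^ 2) := hmain
          _ ≤ q * (q ^ t * ‖x0 - xstar‖ ^ 2) := mul_le_mul_of_nonneg_left (ih ω) hq0
          _ = q ^ (t + 1) * ‖x0 - xstar‖ ^ 2 := by rw [pow_succ]; ring
    -- conclusion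
    have hcnn : 0 ≤ q ^ T * ‖x0 - xstar‖ ^ 2 :=
      mul_nonneg (pow_nonneg hq0 T) (sq_nonneg _)
    have hb : ∀ ω, ‖(n : ℝ)⁻¹ • ∑ i, X T i ω - xstar‖ ^ 2 ≤ q ^ T * ‖x0 - xstar‖ ^ 2 := by
      intro ω
      exact le_trans (le_trans (my_avg_dist_sq hn (fun i => X T i ω) xstar)
        (le_refl _)) (hV T ω)
    by_cases hInt : Integrable (fun ω => ‖(n : ℝ)⁻¹ • ∑ i, X T i ω - xstar‖ ^ 2) P
    · have h := integral_mono hInt (integrable_const (q ^ T * ‖x0 - xstar‖ ^ 2)) hb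
      simpa [integral_const, measure_univ] using h
    · rw [integral_undef hInt]
      exact hcnn
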